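/- For every integer n > 1, the identity \((1+q^{2n})\binom{2n-1}{n-1}_{q^2} = \binom{2n}{n}_{q^2}\) holds, and if n is odd then \(\binom{2n-1}{n-1}_{q^2} \equiv (-1)^{n-1} q^{n(n-1)} \pmod{\Phi_n(q^2)}\) in \(\mathbb{Z}[q]\). -/

import Mathlib

open Finset Polynomial

/-- `(Q; Q)_m = ∏_{j=1}^{m} (1 - Q^j)` with `Q = X^2`, in `ℤ[X]`. -/
noncomputable def pp (m : ℕ) : Polynomial ℤ :=
  ∏ j ∈ Finset.range m, (1 - (X : Polynomial ℤ) ^ (2 * (j + 1)))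

noncomputable def gb : ℕ → ℕ → Polynomial ℤ
  | _, 0 => 1
  | 0, _+1 => 0
  | m+1, k+1 => gb m k + X ^ (2*(k+1)) * gb m (k+1)

lemma gb_zero : ∀ m k : ℕ, m < k → gb m k = 0
  | 0, _+1, _ => by simp [gb]
  | m+1, k+1, h => by
      simp [gb, gb_zero m k (by omega), gb_zero m (k+1) (by omega)]

lemma gb_diag : ∀ m : ℕ, gb m m = 1
  | 0 => by simp [gb]
  | m+1 => by simp [gb, gb_diag m, gb_zero m (m+1) (by omega)]

lemma pp_succ (m : ℕ) : pp (m+1) = pp m * (1 - (X : Polynomial ℤ) ^ (2*(m+1))) := by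
  simp [pp, Finset.prod_range_succ]

lemma gb_prod : ∀ m k d : ℕ, m = k + d → gb m k * (pp k * pp d) = pp m := by
  intro m
  induction m with
  | zero => intro k d h
            obtain ⟨rfl, rfl⟩ : k = 0 ∧ d = 0 := by omega
            simp [gb, pp]
  | succ m ih =>
    intro k d h
    match k, d with
    | 0, d => obtain rfl : d = m + 1 := by omega
              simp [gb, pp]
    | j+1, 0 => obtain rfl : j = m := by omega
                simp [gb_diag, pp]
    | j+1, e+1 =>
      have h1 := ih j (e+1) (by omega)
      have h2 := ih (j+1) e (by omega)
      obtain rfl : m = j + e + 1 := by omega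
      show (gb _ j + X ^ (2*(j+1)) * gb _ (j+1)) * (pp (j+1) * pp (e+1)) = pp (j+e+1+1)
      rw [pp_succ j, pp_succ e, pp_succ (j+e+1)]
      rw [pp_succ e] at h1
      rw [pp_succ j] at h2
      linear_combination (1 - (X:Polynomial ℤ) ^ (2*(j+1))) * h1 +
        (X:Polynomial ℤ) ^ (2*(j+1)) * (1 - (X:Polynomial ℤ) ^ (2*(e+1))) * h2

lemma pp_ne_zero (m : ℕ) : pp m ≠ 0 := by
  intro h
  have : (pp m).eval 0 = 1 := by
    simp [pp, Polynomial.eval_prod]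
  rw [h] at this
  simp at this

theorem stmt_16 (n : ℕ) (hn : 1 < n) :
    ∃ B₁ B₂ : Polynomial ℤ,
      B₁ * (pp (n - 1) * pp n) = pp (2 * n - 1) ∧
      B₂ * (pp n) ^ 2 = pp (2 * n) ∧
      (1 + (X : Polynomial ℤ) ^ (2 * n)) * B₁ = B₂ ∧
      (Odd n →
        (Polynomial.cyclotomic n ℤ).comp ((X : Polynomial ℤ) ^ 2) ∣
          B₁ - (-1) ^ (n - 1) * X ^ (n * (n - 1))) := by
  set B₁ := gb (2*n-1) (n-1) with hB₁
  set B₂ := gb (2*n) n with hB₂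
  have h1 : B₁ * (pp (n-1) * pp n) = pp (2*n-1) := gb_prod _ _ _ (by omega)
  have h2 : B₂ * (pp n * pp n) = pp (2*n) := gb_prod _ _ _ (by omega)
  have hpn : pp n = pp (n-1) * (1 - (X:Polynomial ℤ)^(2*n)) := by
    have := pp_succ (n-1)
    rw [show n-1+1 = n by omega] at this
    exact this
  have hp2n : pp (2*n) = pp (2*n-1) * (1 - (X:Polynomial ℤ)^(2*(2*n))) := by
    have := pp_succ (2*n-1)
    rw [show 2*n-1+1 = 2*n by omega] at this
    exact this
  have h3 : (1 + (X : Polynomial ℤ) ^ (2*n)) * B₁ = B₂ := by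
    apply mul_right_cancel₀ (mul_ne_zero (pp_ne_zero n) (pp_ne_zero n))
    rw [h2, hp2n, ← h1, hpn]
    ring
  refine ⟨B₁, B₂, h1, by rw [sq]; exact h2, h3, ?_⟩
  intro hodd
  set Φ := (Polynomial.cyclotomic n ℤ).comp ((X : Polynomial ℤ) ^ 2) with hΦ
  have hΦdvd : Φ ∣ (X:Polynomial ℤ)^(2*n) - 1 := by
    obtain ⟨c, hc⟩ := cyclotomic.dvd_X_pow_sub_one n ℤ
    refine ⟨c.comp (X^2), ?_⟩
    have : ((X:Polynomial ℤ)^n - 1).comp (X^2) = X^(2*n) - 1 := by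
      simp [sub_comp, pow_comp, ← pow_mul, mul_comm]
    rw [← this, hc, mul_comp]
  -- B₁ * pp (n-1) = ∏_{i<n-1} (1 - X^{2(n+i+1)})
  have hR : B₁ * pp (n-1) = ∏ i ∈ range (n-1), (1 - (X:Polynomial ℤ)^(2*(n+i+1))) := by
    apply mul_right_cancel₀ (pp_ne_zero n)
    have e1 : B₁ * pp (n-1) * pp n = pp (2*n-1) := by rw [← h1]; ring
    rw [e1]
    have e2 : pp (2*n-1) = pp n * ∏ i ∈ range (n-1), (1 - (X:Polynomial ℤ)^(2*(n+i+1))) := by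
      rw [pp, show 2*n-1 = n + (n-1) by omega, Finset.prod_range_add]
      rfl
    rw [e2]; ring
  have key : Φ ∣ (B₁ - 1) * pp (n-1) := by
    have hfac : ∀ i : ℕ, Φ ∣ (1 - (X:Polynomial ℤ)^(2*(n+i+1))) - (1 - X^(2*(i+1))) := by
      intro i
      have e : (1 - (X:Polynomial ℤ)^(2*(n+i+1))) - (1 - X^(2*(i+1)))
          = -(X^(2*(i+1)) * ((X:Polynomial ℤ)^(2*n) - 1)) := by ring
      rw [e]
      exact (hΦdvd.mul_left _).neg_right
    have hq : (Ideal.Quotient.mk (Ideal.span {Φ}))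
          (∏ i ∈ range (n-1), (1 - (X:Polynomial ℤ)^(2*(n+i+1))))
        = (Ideal.Quotient.mk (Ideal.span {Φ})) (pp (n-1)) := by
      rw [pp, map_prod, map_prod]
      refine Finset.prod_congr rfl fun i _ => ?_
      exact Ideal.Quotient.eq.mpr (Ideal.mem_span_singleton.mpr (hfac i))
    have hd := Ideal.mem_span_singleton.mp (Ideal.Quotient.eq.mp hq)
    rw [← hR] at hd
    rw [sub_one_mul]
    exact hd
  have hprime : ∀ m : ℕ, 0 < m → Prime (Polynomial.cyclotomic m ℤ) := fun m hm =>
    (UniqueFactorizationMonoid.irreducible_iff_prime).mp (cyclotomic.irreducible hm)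
  have h2n : ¬ (2 ∣ n) := by
    rw [← even_iff_two_dvd]
    exact (Nat.not_even_iff_odd.mpr hodd)
  have hexp : Φ = Polynomial.cyclotomic (n*2) ℤ * Polynomial.cyclotomic n ℤ := by
    rw [hΦ, ← Polynomial.expand_eq_comp_X_pow,
      cyclotomic_expand_eq_cyclotomic_mul Nat.prime_two h2n]
  -- neither cyclotomic factor divides pp (n-1)
  have hno : ∀ m : ℕ, 0 < m → Polynomial.cyclotomic m ℤ ∣ pp (n-1) →
      ∃ i, i < n - 1 ∧ m ∣ 2*(i+1) := by
    intro m hm hdvd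
    rw [pp] at hdvd
    obtain ⟨i, hi, hdvd'⟩ := (hprime m hm).exists_mem_finset_dvd hdvd
    refine ⟨i, Finset.mem_range.mp hi, ?_⟩
    have hmap : Polynomial.cyclotomic m ℂ ∣
        Polynomial.map (Int.castRingHom ℂ) (1 - X^(2*(i+1))) := by
      have := Polynomial.map_dvd (Int.castRingHom ℂ) hdvd'
      rwa [Polynomial.map_cyclotomic] at this
    have hζ := Complex.isPrimitiveRoot_exp m (by omega)
    have hroot := (hζ.isRoot_cyclotomic hm).dvd hmap
    have heval : (1 : ℂ) - (Complex.exp (2 * Real.pi * Complex.I / m))^(2*(i+1)) = 0 := by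
      simpa using hroot
    exact hζ.dvd_of_pow_eq_one _ (by linear_combination -heval)
  have hcop : Nat.Coprime n 2 :=
    ((Nat.prime_two.coprime_iff_not_dvd).mpr h2n).symm
  have hnd1 : ¬ Polynomial.cyclotomic n ℤ ∣ pp (n-1) := by
    intro h
    obtain ⟨i, hi, hd⟩ := hno n (by omega) h
    have hni : n ∣ i + 1 := (Nat.Coprime.dvd_of_dvd_mul_left hcop hd)
    have := Nat.le_of_dvd (by omega) hni
    omega
  have hnd2 : ¬ Polynomial.cyclotomic (n*2) ℤ ∣ pp (n-1) := by
    intro h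
    obtain ⟨i, hi, hd⟩ := hno (n*2) (by omega) h
    obtain ⟨c, hc⟩ := hd
    have hlin : n*2*c = 2*(n*c) := by ring
    have hic : i + 1 = n * c := by omega
    rcases c with _ | c
    · omega
    · have : n ≤ n * (c+1) := Nat.le_mul_of_pos_right n (by omega)
      omega
  have d1 : Polynomial.cyclotomic n ℤ ∣ B₁ - 1 := by
    have : Polynomial.cyclotomic n ℤ ∣ (B₁ - 1) * pp (n-1) :=
      dvd_trans ⟨Polynomial.cyclotomic (n*2) ℤ, by rw [hexp]; ring⟩ key
    rcases ((hprime n (by omega)).dvd_mul).mp this with h | h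
    · exact h
    · exact absurd h hnd1
  have d2 : Polynomial.cyclotomic (n*2) ℤ ∣ B₁ - 1 := by
    have : Polynomial.cyclotomic (n*2) ℤ ∣ (B₁ - 1) * pp (n-1) :=
      dvd_trans ⟨Polynomial.cyclotomic n ℤ, by rw [hexp]⟩ key
    rcases ((hprime (n*2) (by omega)).dvd_mul).mp this with h | h
    · exact h
    · exact absurd h hnd2
  have hΦB : Φ ∣ B₁ - 1 := by
    rw [hexp]
    obtain ⟨c, hc⟩ := d1
    have hdc : Polynomial.cyclotomic (n*2) ℤ ∣ Polynomial.cyclotomic n ℤ * c := hc ▸ d2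
    rcases ((hprime (n*2) (by omega)).dvd_mul).mp hdc with h | h
    · exfalso
      have hass := (hprime (n*2) (by omega)).associated_of_dvd (hprime n (by omega)) h
      have heq := Polynomial.eq_of_monic_of_associated
        (Polynomial.cyclotomic.monic _ ℤ) (Polynomial.cyclotomic.monic _ ℤ) hass
      have := Polynomial.cyclotomic_injective (R := ℤ) heq
      omega
    · obtain ⟨e, he⟩ := h
      exact ⟨e, by rw [hc, he]; ring⟩
  -- X^{n(n-1)} ≡ 1
  obtain ⟨t, ht⟩ : ∃ t, n - 1 = 2 * t := by
    obtain ⟨s, hs⟩ := hodd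
    exact ⟨s, by omega⟩
  have hX : Φ ∣ (X:Polynomial ℤ)^(n*(n-1)) - 1 := by
    have hdd : (X:Polynomial ℤ)^(2*n) - 1 ∣ ((X:Polynomial ℤ)^(2*n))^t - 1^t :=
      sub_dvd_pow_sub_pow _ _ t
    rw [one_pow, ← pow_mul, show 2*n*t = n*(n-1) by rw [ht]; ring] at hdd
    exact hΦdvd.trans hdd
  have hneg : ((-1 : Polynomial ℤ))^(n-1) = 1 := Even.neg_one_pow (by
    rw [ht]; exact even_two_mul t)
  rw [hneg, one_mul, show B₁ - (X:Polynomial ℤ)^(n*(n-1))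
      = (B₁ - 1) - ((X:Polynomial ℤ)^(n*(n-1)) - 1) by ring]
  exact dvd_sub hΦB hX
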